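/- Let ε > 0 and let p : ℕ → [0,1] satisfy n·p(n) ≥ (1+ε)·log n for all large n. Then the probability that the Erdős–Rényi random graph G(n, p(n)) is connected tends to 1 as n → ∞. -/

import Mathlib

open scoped Classical

/-- The number of edges of a simple graph on `Fin n`. -/
noncomputable def edgeCount {n : ℕ} (g : SimpleGraph (Fin n)) : ℕ := g.edgeSet.ncard

/-- The probability, under the Erdős–Rényi model `G(n,p)` (each of the `C(n,2)` possible
edges present independently with probability `p`), of a set `E` of graphs on `[n]`. -/
noncomputable def erProb (n : ℕ) (p : ℝ) (E : Set (SimpleGraph (Fin n))) : ℝ :=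
  ∑ g ∈ Finset.univ.filter (fun g : SimpleGraph (Fin n) => g ∈ E),
    p ^ edgeCount g * (1 - p) ^ (n.choose 2 - edgeCount g)

lemma binom_sum {α : Type*} [DecidableEq α] (s : Finset α) (a b : ℝ) :
    ∑ t ∈ s.powerset, a ^ t.card * b ^ (s.card - t.card) = (a + b) ^ s.card := by
  have := Finset.prod_add (fun _ : α => a) (fun _ : α => b) s
  simp only [Finset.prod_const] at this
  rw [this]
  refine Finset.sum_congr rfl fun t ht => ?_
  rw [Finset.card_sdiff_of_subset (Finset.mem_powerset.mp ht)]

lemma edgeCount_eq {n : ℕ} (g : SimpleGraph (Fin n)) : edgeCount g = g.edgeFinset.card := by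
  simp [edgeCount, SimpleGraph.edgeFinset, Set.ncard_eq_toFinset_card']

noncomputable def K (n : ℕ) : Finset (Sym2 (Fin n)) := (⊤ : SimpleGraph (Fin n)).edgeFinset

lemma K_card (n : ℕ) : (K n).card = n.choose 2 := by
  rw [K, SimpleGraph.card_edgeFinset_top_eq_card_choose_two, Fintype.card_fin]

lemma edgeFinset_subset_K {n : ℕ} (g : SimpleGraph (Fin n)) : g.edgeFinset ⊆ K n :=
  SimpleGraph.edgeFinset_mono le_top

lemma erProb_avoid {n : ℕ} (p : ℝ) (C : Finset (Sym2 (Fin n))) (hC : C ⊆ K n) :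
    erProb n p {g | ∀ e ∈ C, e ∉ g.edgeSet} = (1 - p) ^ C.card := by
  have hKdiag : ∀ e ∈ K n, ¬ e.IsDiag := by
    intro e he
    have := SimpleGraph.mem_edgeFinset.mp he
    rwa [SimpleGraph.edgeSet_top] at this
  have key : erProb n p {g | ∀ e ∈ C, e ∉ g.edgeSet}
      = ∑ t ∈ (K n \ C).powerset, p ^ t.card * (1 - p) ^ (n.choose 2 - t.card) := by
    rw [erProb]
    refine Finset.sum_nbij' (fun g => g.edgeFinset)
      (fun t => SimpleGraph.fromEdgeSet ↑t) ?_ ?_ ?_ ?_ ?_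
    · intro g hg
      simp only [Finset.mem_filter, Set.mem_setOf_eq] at hg
      rw [Finset.mem_powerset]
      intro e he
      rw [Finset.mem_sdiff]
      refine ⟨edgeFinset_subset_K g he, fun heC => hg.2 e heC (SimpleGraph.mem_edgeFinset.mp he)⟩
    · intro t ht
      rw [Finset.mem_powerset] at ht
      simp only [Finset.mem_filter, Finset.mem_univ, true_and, Set.mem_setOf_eq]
      intro e heC
      rw [SimpleGraph.edgeSet_fromEdgeSet]
      rintro ⟨het, -⟩
      rw [Finset.mem_coe] at het
      exact (Finset.mem_sdiff.mp (ht het)).2 heC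
    · intro g hg
      show SimpleGraph.fromEdgeSet ↑g.edgeFinset = g
      rw [SimpleGraph.coe_edgeFinset, SimpleGraph.fromEdgeSet_edgeSet]
    · intro t ht
      rw [Finset.mem_powerset] at ht
      ext e
      simp only [SimpleGraph.edgeFinset, Set.mem_toFinset, SimpleGraph.edgeSet_fromEdgeSet,
        Set.mem_diff, Finset.mem_coe, Set.mem_setOf_eq]
      constructor
      · rintro ⟨he, -⟩; exact he
      · intro he
        exact ⟨he, hKdiag e (Finset.mem_sdiff.mp (ht he)).1⟩
    · intro g hg
      rw [edgeCount_eq]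
  rw [key]
  have hsub : (K n \ C).card = n.choose 2 - C.card := by
    rw [Finset.card_sdiff_of_subset hC, K_card]
  have hCle : C.card ≤ n.choose 2 := by
    rw [← K_card n]; exact Finset.card_le_card hC
  have : ∀ t ∈ (K n \ C).powerset,
      p ^ t.card * (1 - p) ^ (n.choose 2 - t.card)
        = (1 - p) ^ C.card * (p ^ t.card * (1 - p) ^ ((K n \ C).card - t.card)) := by
    intro t ht
    have htle : t.card ≤ (K n \ C).card := Finset.card_le_card (Finset.mem_powerset.mp ht)
    have : n.choose 2 - t.card = C.card + ((K n \ C).card - t.card) := by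
      rw [hsub] at htle ⊢; omega
    rw [this, pow_add]; ring
  rw [Finset.sum_congr rfl this, ← Finset.mul_sum, binom_sum]
  simp

lemma erProb_univ (n : ℕ) (p : ℝ) : erProb n p Set.univ = 1 := by
  have := erProb_avoid (n := n) p ∅ (Finset.empty_subset _)
  simpa using this

lemma erProb_nonneg {n : ℕ} {p : ℝ} (hp0 : 0 ≤ p) (hp1 : p ≤ 1) (E : Set (SimpleGraph (Fin n))) :
    0 ≤ erProb n p E := by
  refine Finset.sum_nonneg fun g _ => ?_
  have : (0:ℝ) ≤ 1 - p := by linarith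
  positivity

lemma erProb_compl (n : ℕ) (p : ℝ) (E : Set (SimpleGraph (Fin n))) :
    erProb n p E = 1 - erProb n p Eᶜ := by
  have h2 : erProb n p E + erProb n p Eᶜ = 1 := by
    rw [← erProb_univ n p, erProb, erProb, erProb, Finset.sum_filter, Finset.sum_filter,
      Finset.sum_filter, ← Finset.sum_add_distrib]
    refine Finset.sum_congr rfl fun g _ => ?_
    by_cases hg : g ∈ E <;> simp [hg]
  linarith

lemma erProb_mono {n : ℕ} {p : ℝ} (hp0 : 0 ≤ p) (hp1 : p ≤ 1)
    {E F : Set (SimpleGraph (Fin n))} (hEF : E ⊆ F) : erProb n p E ≤ erProb n p F := by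
  have hw : ∀ g : SimpleGraph (Fin n),
      (0:ℝ) ≤ p ^ edgeCount g * (1 - p) ^ (n.choose 2 - edgeCount g) := by
    intro g
    have : (0:ℝ) ≤ 1 - p := by linarith
    positivity
  rw [erProb, erProb, Finset.sum_filter, Finset.sum_filter]
  refine Finset.sum_le_sum fun g _ => ?_
  by_cases hg : g ∈ E
  · simp only [hg, if_true, hEF hg, if_true]; exact le_refl _
  · simp only [hg, if_false]
    by_cases hgF : g ∈ F <;> simp [hgF, hw g]

lemma erProb_union_le_two {n : ℕ} {p : ℝ} (hp0 : 0 ≤ p) (hp1 : p ≤ 1)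
    (E F : Set (SimpleGraph (Fin n))) :
    erProb n p (E ∪ F) ≤ erProb n p E + erProb n p F := by
  have hw : ∀ g : SimpleGraph (Fin n),
      (0:ℝ) ≤ p ^ edgeCount g * (1 - p) ^ (n.choose 2 - edgeCount g) := by
    intro g
    have : (0:ℝ) ≤ 1 - p := by linarith
    positivity
  rw [erProb, erProb, erProb, Finset.sum_filter, Finset.sum_filter, Finset.sum_filter,
    ← Finset.sum_add_distrib]
  refine Finset.sum_le_sum fun g _ => ?_
  by_cases hgE : g ∈ E <;> by_cases hgF : g ∈ F <;>
    simp [hgE, hgF, Set.mem_union, hw g]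

lemma erProb_union_le {n : ℕ} {p : ℝ} (hp0 : 0 ≤ p) (hp1 : p ≤ 1)
    {ι : Type*} (I : Finset ι) (A : ι → Set (SimpleGraph (Fin n))) :
    erProb n p (⋃ i ∈ I, A i) ≤ ∑ i ∈ I, erProb n p (A i) := by
  classical
  induction I using Finset.induction with
  | empty => simp only [Finset.notMem_empty, Set.iUnion_of_empty, Set.iUnion_empty,
      Finset.sum_empty]
             exact le_of_eq (by rw [erProb]; simp)
  | @insert a s hx ih =>
    rw [Finset.sum_insert hx]
    have hsub : (⋃ i ∈ insert a s, A i) ⊆ (A a) ∪ (⋃ i ∈ s, A i) := by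
      intro g hg
      simp only [Set.mem_iUnion, Finset.mem_insert, exists_prop] at hg
      obtain ⟨i, hi | hi, hgi⟩ := hg
      · left; rwa [hi] at hgi
      · right; simp only [Set.mem_iUnion, exists_prop]; exact ⟨i, hi, hgi⟩
    calc erProb n p (⋃ i ∈ insert a s, A i) ≤ erProb n p ((A a) ∪ ⋃ i ∈ s, A i) :=
          erProb_mono hp0 hp1 hsub
      _ ≤ erProb n p (A a) + erProb n p (⋃ i ∈ s, A i) := erProb_union_le_two hp0 hp1 _ _
      _ ≤ erProb n p (A a) + ∑ i ∈ s, erProb n p (A i) := by linarith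

noncomputable def cross {n : ℕ} (S : Finset (Fin n)) : Finset (Sym2 (Fin n)) :=
  (S ×ˢ Sᶜ).image (fun ab => s(ab.1, ab.2))

lemma cross_subset_K {n : ℕ} (S : Finset (Fin n)) : cross S ⊆ K n := by
  intro e he
  simp only [cross, Finset.mem_image, Finset.mem_product, Finset.mem_compl] at he
  obtain ⟨⟨a, b⟩, ⟨haS, hbS⟩, rfl⟩ := he
  have hab : a ≠ b := fun h => hbS (h ▸ haS)
  simp only [K, SimpleGraph.mem_edgeFinset, SimpleGraph.edgeSet_top, Set.mem_setOf_eq,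
    Sym2.isDiag_iff_proj_eq]
  exact hab

lemma cross_card {n : ℕ} (S : Finset (Fin n)) : (cross S).card = S.card * Sᶜ.card := by
  rw [cross, Finset.card_image_of_injOn, Finset.card_product]
  rintro ⟨a, b⟩ hab ⟨c, d⟩ hcd h
  simp only [Finset.mem_coe, Finset.mem_product, Finset.mem_compl] at hab hcd
  simp only [Sym2.eq_iff] at h
  rcases h with ⟨rfl, rfl⟩ | ⟨rfl, rfl⟩
  · rfl
  · exact absurd hab.1 hcd.2

noncomputable def avoidSet {n : ℕ} (S : Finset (Fin n)) : Set (SimpleGraph (Fin n)) :=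
  {g | ∀ e ∈ cross S, e ∉ g.edgeSet}

lemma disconnected_subset {n : ℕ} (hn : 1 ≤ n) :
    {g : SimpleGraph (Fin n) | ¬ g.Connected} ⊆
      ⋃ S ∈ Finset.univ.powerset.filter
        (fun S : Finset (Fin n) => S.Nonempty ∧ S ≠ Finset.univ), avoidSet S := by
  intro g hg
  simp only [Set.mem_setOf_eq] at hg
  haveI : Nonempty (Fin n) := ⟨⟨0, hn⟩⟩
  rw [SimpleGraph.connected_iff] at hg
  push_neg at hg
  have hpre : ¬ g.Preconnected := fun h => (hg h).false ⟨0, hn⟩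
  rw [SimpleGraph.Preconnected] at hpre
  push_neg at hpre
  obtain ⟨u, v, huv⟩ := hpre
  set S : Finset (Fin n) := Finset.univ.filter (fun x => g.Reachable u x) with hS
  have huS : u ∈ S := by simp [hS, SimpleGraph.Reachable.refl]
  have hvS : v ∉ S := by simp [hS, huv]
  simp only [Set.mem_iUnion, exists_prop]
  refine ⟨S, ?_, ?_⟩
  · simp only [Finset.mem_filter, Finset.mem_powerset]
    exact ⟨Finset.subset_univ S, ⟨u, huS⟩, fun h => hvS (h ▸ Finset.mem_univ v)⟩
  · intro e he hee
    simp only [cross, Finset.mem_image, Finset.mem_product, Finset.mem_compl] at he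
    obtain ⟨⟨a, b⟩, ⟨haS, hbS⟩, rfl⟩ := he
    rw [SimpleGraph.mem_edgeSet] at hee
    have hra : g.Reachable u a := by
      simpa [hS] using haS
    exact hbS (by simp [hS, hra.trans hee.reachable])

lemma erProb_avoidSet {n : ℕ} (p : ℝ) (S : Finset (Fin n)) :
    erProb n p (avoidSet S) = (1 - p) ^ (S.card * (n - S.card)) := by
  rw [avoidSet, erProb_avoid p (cross S) (cross_subset_K S), cross_card,
    Finset.card_compl, Fintype.card_fin]

lemma disc_sum_bound {n : ℕ} {p : ℝ} (hp0 : 0 ≤ p) (hp1 : p ≤ 1) (hn : 1 ≤ n) :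
    erProb n p {g : SimpleGraph (Fin n) | ¬ g.Connected}
      ≤ ∑ k ∈ Finset.Icc 1 (n-1), (n.choose k : ℝ) * (1-p) ^ (k*(n-k)) := by
  classical
  set 𝒮 : Finset (Finset (Fin n)) := Finset.univ.powerset.filter
    (fun S : Finset (Fin n) => S.Nonempty ∧ S ≠ Finset.univ) with h𝒮
  have h1 : erProb n p {g : SimpleGraph (Fin n) | ¬ g.Connected}
      ≤ ∑ S ∈ 𝒮, erProb n p (avoidSet S) :=
    (erProb_mono hp0 hp1 (disconnected_subset hn)).trans (erProb_union_le hp0 hp1 𝒮 _)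
  refine h1.trans (le_of_eq ?_)
  have hsplit : 𝒮 = (Finset.Icc 1 (n-1)).biUnion
      (fun k => Finset.powersetCard k (Finset.univ : Finset (Fin n))) := by
    ext S
    simp only [h𝒮, Finset.mem_filter, Finset.mem_powerset, Finset.mem_biUnion,
      Finset.mem_Icc, Finset.mem_powersetCard]
    constructor
    · rintro ⟨hsub, hne, hnuniv⟩
      refine ⟨S.card, ⟨Finset.card_pos.mpr hne, ?_⟩, hsub, rfl⟩
      have hle : S.card ≤ n := by
        simpa [Fintype.card_fin] using Finset.card_le_univ S
      have : S.card ≠ n := fun hcn => hnuniv (by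
        apply Finset.eq_univ_of_card
        simpa [Fintype.card_fin] using hcn)
      omega
    · rintro ⟨k, ⟨hk1, hk2⟩, hsub, rfl⟩
      refine ⟨hsub, Finset.card_pos.mp (by omega), fun hu => ?_⟩
      rw [hu] at hk2
      simp only [Finset.card_univ, Fintype.card_fin] at hk2
      omega
  rw [hsplit, Finset.sum_biUnion]
  · refine Finset.sum_congr rfl fun k hk => ?_
    rw [Finset.mem_Icc] at hk
    have : ∀ S ∈ Finset.powersetCard k (Finset.univ : Finset (Fin n)),
        erProb n p (avoidSet S) = (1-p) ^ (k*(n-k)) := by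
      intro S hS
      rw [Finset.mem_powersetCard] at hS
      rw [erProb_avoidSet, hS.2]
    rw [Finset.sum_congr rfl this, Finset.sum_const, Finset.card_powersetCard,
      Finset.card_univ, Fintype.card_fin, nsmul_eq_mul]
  · intro a ha b hb hab
    simp only [Finset.coe_Icc, Set.mem_Icc] at ha hb
    simp only [Finset.disjoint_left]
    intro S hSa hSb
    rw [Finset.mem_powersetCard] at hSa hSb
    exact hab (hSa.2 ▸ hSb.2)

lemma choose_le_two_pow_real (n k : ℕ) (hk : k ≤ n) : ((n.choose k : ℕ) : ℝ) ≤ 2 ^ n := by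
  have h1 : n.choose k ≤ 2 ^ n := by
    calc n.choose k ≤ ∑ i ∈ Finset.range (n+1), n.choose i :=
          Finset.single_le_sum (fun i _ => Nat.zero_le _) (Finset.mem_range.mpr (by omega))
      _ = 2 ^ n := Nat.sum_range_choose n
  calc ((n.choose k : ℕ) : ℝ) ≤ ((2^n : ℕ) : ℝ) := by exact_mod_cast h1
    _ = 2 ^ n := by push_cast; ring

lemma rpow_pow_exp {n : ℕ} (hn : 0 < n) (c : ℝ) (m : ℕ) :
    ((n:ℝ) ^ (c:ℝ)) ^ m = Real.exp (c * m * Real.log n) := by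
  rw [← Real.rpow_natCast ((n:ℝ)^c) m, ← Real.rpow_mul (by positivity),
    Real.rpow_def_of_pos (by exact_mod_cast hn)]
  ring_nf

lemma term_bound {ε : ℝ} (hε : 0 < ε) {n k : ℕ} (hk1 : 1 ≤ k) (hk2 : k ≤ n - 1) (hn2 : 2 ≤ n)
    {p : ℝ} (hp0 : 0 ≤ p) (hp1 : p ≤ 1) (hlog : (1 + ε) * Real.log n ≤ (n : ℝ) * p) :
    (n.choose k : ℝ) * (1 - p) ^ (k * (n - k))
      ≤ ((n:ℝ) ^ (-(ε/2) : ℝ)) ^ k + ((n:ℝ) ^ (-(ε/2) : ℝ)) ^ (n - k)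
        + 2 ^ n * ((n:ℝ) ^ (-(ε/4) : ℝ)) ^ n := by
  have npos : (0:ℝ) < n := by exact_mod_cast Nat.lt_of_lt_of_le Nat.zero_lt_two hn2
  set L := Real.log n with hLdef
  have hL : 0 ≤ L := Real.log_nonneg (by exact_mod_cast Nat.one_le_of_lt hn2)
  set δ := ε / (2 * (1 + ε)) with hδdef
  have hδpos : 0 < δ := by positivity
  have hc : (1 + ε) * L / n ≤ p := by
    rw [div_le_iff₀ npos]
    linarith [hlog]
  have hcpos : 0 ≤ (1 + ε) * L / n := by positivity
  set m := min k (n - k) with hm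
  have hkn : k ≤ n := by omega
  have hm1 : 1 ≤ m := by omega
  have hm2 : 2 * m ≤ n := by omega
  have hmn : m ≤ n := by omega
  have hkk : k * (n - k) = m * (n - m) := by
    rcases le_total k (n - k) with hle | hle
    · rw [hm, min_eq_left hle]
    · rw [hm, min_eq_right hle]
      have h2 : n - (n - k) = k := by omega
      rw [h2, Nat.mul_comm]
  have hcast : ((k * (n - k) : ℕ) : ℝ) = (m:ℝ) * ((n:ℝ) - m) := by
    rw [hkk, Nat.cast_mul, Nat.cast_sub hmn]
  have hmm0 : 0 ≤ (m:ℝ) * ((n:ℝ) - m) := by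
    have h1 : (m:ℝ) ≤ n := by exact_mod_cast hmn
    have h0 : (0:ℝ) ≤ m := by positivity
    nlinarith
  have hq : (1 - p) ^ (k * (n - k))
      ≤ Real.exp (-(((1 + ε) * L / n) * ((m:ℝ) * ((n:ℝ) - m)))) := by
    have e0 : 1 - p ≤ Real.exp (-p) := by linarith [Real.add_one_le_exp (-p)]
    have e1 : (1 - p) ^ (k * (n - k)) ≤ Real.exp (-p) ^ (k * (n - k)) :=
      pow_le_pow_left₀ (by linarith) e0 _
    have e2 : Real.exp (-p) ^ (k * (n - k))
        = Real.exp (-p * ((m:ℝ) * ((n:ℝ) - m))) := by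
      rw [← Real.exp_nat_mul, ← hcast]; ring_nf
    have e3 : -p * ((m:ℝ) * ((n:ℝ) - m))
        ≤ -(((1 + ε) * L / n) * ((m:ℝ) * ((n:ℝ) - m))) := by
      nlinarith [mul_le_mul_of_nonneg_right hc hmm0]
    rw [e2] at e1
    exact e1.trans (Real.exp_le_exp.mpr e3)
  have hr0 : 0 ≤ ((n:ℝ) ^ (-(ε/2) : ℝ)) := Real.rpow_nonneg npos.le _
  have hB : (0:ℝ) ≤ 2 ^ n * ((n:ℝ) ^ (-(ε/4) : ℝ)) ^ n := by positivity
  rcases le_or_gt (m:ℝ) (δ * n) with hA | hA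
  · -- small part
    have hnm : (1 - δ) * n ≤ (n:ℝ) - m := by linarith
    have key : (1 + ε) * (1 - δ) = 1 + ε/2 := by
      rw [hδdef]; field_simp; ring
    have hexp_ge : (1 + ε/2) * L * m ≤ ((1 + ε) * L / n) * ((m:ℝ) * ((n:ℝ) - m)) := by
      have h0 : 0 ≤ (1 + ε) * L / n * (m:ℝ) := by positivity
      have h1 := mul_le_mul_of_nonneg_left hnm h0
      have h2 : (1 + ε) * L / n * (m:ℝ) * ((1 - δ) * n) = ((1 + ε) * (1 - δ)) * L * m := by
        field_simp
      calc (1 + ε/2) * L * (m:ℝ) = ((1 + ε) * (1 - δ)) * L * m := by rw [key]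
        _ = (1 + ε) * L / n * (m:ℝ) * ((1 - δ) * n) := h2.symm
        _ ≤ (1 + ε) * L / n * (m:ℝ) * ((n:ℝ) - m) := h1
        _ = ((1 + ε) * L / n) * ((m:ℝ) * ((n:ℝ) - m)) := by ring
    have hqA : (1 - p) ^ (k * (n - k)) ≤ ((n:ℝ) ^ (-(1 + ε/2) : ℝ)) ^ m := by
      rw [rpow_pow_exp (by omega) (-(1 + ε/2)) m]
      refine hq.trans (Real.exp_le_exp.mpr ?_)
      rw [hLdef] at hexp_ge ⊢
      ring_nf at hexp_ge ⊢
      linarith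
    have hchoose : (n.choose k : ℝ) ≤ (n:ℝ) ^ (m : ℕ) := by
      rcases le_total k (n - k) with hle | hle
      · rw [hm, min_eq_left hle]; exact_mod_cast Nat.choose_le_pow n k
      · rw [hm, min_eq_right hle]
        have hsymm : n.choose k = n.choose (n - k) := (Nat.choose_symm hkn).symm
        rw [hsymm]; exact_mod_cast Nat.choose_le_pow n (n - k)
    have hfin : (n:ℝ) ^ (m : ℕ) * ((n:ℝ) ^ (-(1 + ε/2) : ℝ)) ^ m
        = ((n:ℝ) ^ (-(ε/2) : ℝ)) ^ m := by
      calc (n:ℝ) ^ (m : ℕ) * ((n:ℝ) ^ (-(1 + ε/2) : ℝ)) ^ m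
          = (((n:ℝ) ^ (1:ℝ)) * (n:ℝ) ^ (-(1 + ε/2) : ℝ)) ^ m := by
            rw [mul_pow, Real.rpow_one]
        _ = ((n:ℝ) ^ (-(ε/2) : ℝ)) ^ m := by
            rw [← Real.rpow_add npos]; congr 1; ring
    have hA2 : (n.choose k : ℝ) * (1 - p) ^ (k * (n - k)) ≤ ((n:ℝ) ^ (-(ε/2) : ℝ)) ^ m := by
      calc (n.choose k : ℝ) * (1 - p) ^ (k * (n - k))
          ≤ (n:ℝ) ^ (m : ℕ) * ((n:ℝ) ^ (-(1 + ε/2) : ℝ)) ^ m := by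
            apply mul_le_mul hchoose hqA (pow_nonneg (by linarith) _) (by positivity)
        _ = ((n:ℝ) ^ (-(ε/2) : ℝ)) ^ m := hfin
    have hrm : ((n:ℝ) ^ (-(ε/2) : ℝ)) ^ m
        ≤ ((n:ℝ) ^ (-(ε/2) : ℝ)) ^ k + ((n:ℝ) ^ (-(ε/2) : ℝ)) ^ (n - k) := by
      rcases le_total k (n - k) with hle | hle
      · rw [hm, min_eq_left hle]; linarith [pow_nonneg hr0 (n - k)]
      · rw [hm, min_eq_right hle]; linarith [pow_nonneg hr0 k]
    linarith
  · -- big part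
    have hmhalf : (m:ℝ) ≤ (n:ℝ) / 2 := by
      have : (2 * m : ℕ) ≤ (n : ℕ) := hm2
      have h2 : ((2 * m : ℕ) : ℝ) ≤ (n:ℝ) := by exact_mod_cast this
      push_cast at h2; linarith
    have hnm2 : (n:ℝ) / 2 ≤ (n:ℝ) - m := by linarith
    have hqB : (1 - p) ^ (k * (n - k)) ≤ ((n:ℝ) ^ (-(ε/4) : ℝ)) ^ n := by
      rw [rpow_pow_exp (by omega) (-(ε/4)) n]
      refine hq.trans (Real.exp_le_exp.mpr ?_)
      have key2 : (ε/4) * (n:ℝ) * L ≤ ((1 + ε) * L / n) * ((m:ℝ) * ((n:ℝ) - m)) := by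
        have h1 : (δ * n) * ((n:ℝ) / 2) ≤ (m:ℝ) * ((n:ℝ) - m) := by
          apply mul_le_mul hA.le hnm2 (by positivity) (by positivity)
        have h2 : ((1 + ε) * L / n) * ((δ * n) * ((n:ℝ) / 2)) = (ε/4) * (n:ℝ) * L := by
          rw [hδdef]; field_simp; ring
        calc (ε/4) * (n:ℝ) * L = ((1 + ε) * L / n) * ((δ * n) * ((n:ℝ)/2)) := h2.symm
          _ ≤ ((1 + ε) * L / n) * ((m:ℝ) * ((n:ℝ) - m)) :=
              mul_le_mul_of_nonneg_left h1 hcpos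
      rw [hLdef] at key2 ⊢
      ring_nf at key2 ⊢
      linarith
    have hchoose2 : (n.choose k : ℝ) ≤ 2 ^ n := choose_le_two_pow_real n k hkn
    have goal2 : (n.choose k : ℝ) * (1 - p) ^ (k * (n - k))
        ≤ 2 ^ n * ((n:ℝ) ^ (-(ε/4) : ℝ)) ^ n :=
      mul_le_mul hchoose2 hqB (pow_nonneg (by linarith) _) (by positivity)
    linarith [pow_nonneg hr0 k, pow_nonneg hr0 (n - k)]

lemma geom_tail_le {r : ℝ} (hr0 : 0 ≤ r) (hr : r ≤ 1/2) (n : ℕ) :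
    ∑ k ∈ Finset.Icc 1 (n-1), r ^ k ≤ 2 * r := by
  have h0 : ∑ k ∈ Finset.Icc 1 (n-1), r ^ k = ∑ j ∈ Finset.range (n-1), r * r ^ j := by
    refine Finset.sum_nbij' (fun k => k - 1) (fun j => j + 1) ?_ ?_ ?_ ?_ ?_
    · intro k hk; simp only [Finset.mem_Icc] at hk; simp only [Finset.mem_range]; omega
    · intro j hj; simp only [Finset.mem_range] at hj; simp only [Finset.mem_Icc]; omega
    · intro k hk; simp only [Finset.mem_Icc] at hk; omega
    · intro j hj; simp only [Finset.mem_range] at hj; omega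
    · intro k hk
      simp only [Finset.mem_Icc] at hk
      rw [← pow_succ']
      congr 1
      omega
  rw [h0, ← Finset.mul_sum]
  have h2 : ∑ j ∈ Finset.range (n-1), r ^ j ≤ 2 := by
    refine le_trans (Finset.sum_le_sum fun j _ => pow_le_pow_left₀ hr0 hr j) ?_
    exact sum_geometric_two_le _
  nlinarith

lemma sum_all_bound {ε : ℝ} (hε : 0 < ε) {n : ℕ} (hn2 : 2 ≤ n)
    {p : ℝ} (hp0 : 0 ≤ p) (hp1 : p ≤ 1) (hlog : (1 + ε) * Real.log n ≤ (n : ℝ) * p)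
    (hr : (n:ℝ) ^ (-(ε/2) : ℝ) ≤ 1/2) :
    ∑ k ∈ Finset.Icc 1 (n-1), (n.choose k : ℝ) * (1-p) ^ (k*(n-k))
      ≤ 4 * (n:ℝ) ^ (-(ε/2) : ℝ) + (n:ℝ) * (2 ^ n * ((n:ℝ) ^ (-(ε/4) : ℝ)) ^ n) := by
  set r := (n:ℝ) ^ (-(ε/2) : ℝ) with hrdef
  set B := (2:ℝ) ^ n * ((n:ℝ) ^ (-(ε/4) : ℝ)) ^ n with hBdef
  have npos : (0:ℝ) < n := by exact_mod_cast Nat.lt_of_lt_of_le Nat.zero_lt_two hn2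
  have hr0 : 0 ≤ r := Real.rpow_nonneg npos.le _
  have hB0 : 0 ≤ B := by positivity
  have step : ∑ k ∈ Finset.Icc 1 (n-1), (n.choose k : ℝ) * (1-p) ^ (k*(n-k))
      ≤ ∑ k ∈ Finset.Icc 1 (n-1), (r ^ k + r ^ (n-k) + B) := by
    refine Finset.sum_le_sum fun k hk => ?_
    rw [Finset.mem_Icc] at hk
    exact term_bound hε hk.1 hk.2 hn2 hp0 hp1 hlog
  refine step.trans ?_
  rw [Finset.sum_add_distrib, Finset.sum_add_distrib, Finset.sum_const, Nat.card_Icc]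
  have hS1 : ∑ k ∈ Finset.Icc 1 (n-1), r ^ k ≤ 2 * r := geom_tail_le hr0 hr n
  have hS2 : ∑ k ∈ Finset.Icc 1 (n-1), r ^ (n-k) = ∑ k ∈ Finset.Icc 1 (n-1), r ^ k := by
    refine Finset.sum_nbij' (fun k => n - k) (fun k => n - k) ?_ ?_ ?_ ?_ ?_
    · intro k hk; simp only [Finset.mem_Icc] at hk ⊢; omega
    · intro k hk; simp only [Finset.mem_Icc] at hk ⊢; omega
    · intro k hk; simp only [Finset.mem_Icc] at hk; omega
    · intro k hk; simp only [Finset.mem_Icc] at hk; omega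
    · intro k hk; rfl
  have hcard : ((n - 1 + 1 - 1) • B : ℝ) ≤ (n:ℝ) * B := by
    rw [nsmul_eq_mul]
    have : ((n - 1 + 1 - 1 : ℕ) : ℝ) ≤ (n:ℝ) := by
      have : (n - 1 + 1 - 1 : ℕ) ≤ n := by omega
      exact_mod_cast this
    exact mul_le_mul_of_nonneg_right this hB0
  rw [hS2]
  linarith

open Filter Topology in
lemma u_tendsto {ε : ℝ} (hε : 0 < ε) :
    Tendsto (fun n : ℕ => (n:ℝ) * (2 ^ n * ((n:ℝ) ^ (-(ε/4) : ℝ)) ^ n)) atTop (𝓝 0) := by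
  have hlogt : Tendsto (fun n : ℕ => Real.log n) atTop atTop :=
    Real.tendsto_log_atTop.comp tendsto_natCast_atTop_atTop
  have hlg : ∀ᶠ n : ℕ in atTop, Real.log 2 ≤ (ε/8) * Real.log n :=
    (hlogt.const_mul_atTop (by positivity : (0:ℝ) < ε/8)).eventually_ge_atTop _
  have hn8 : ∀ᶠ n : ℕ in atTop, (2:ℝ) ≤ (ε/8) * n :=
    ((tendsto_natCast_atTop_atTop (R := ℝ)).const_mul_atTop
      (by positivity : (0:ℝ) < ε/8)).eventually_ge_atTop _
  have hub : ∀ᶠ n : ℕ in atTop,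
      (n:ℝ) * (2 ^ n * ((n:ℝ) ^ (-(ε/4) : ℝ)) ^ n) ≤ (n:ℝ)⁻¹ := by
    filter_upwards [eventually_ge_atTop 2, hlg, hn8] with n h2 hlg hn8
    have npos : (0:ℝ) < n := by exact_mod_cast Nat.lt_of_lt_of_le Nat.zero_lt_two h2
    set L := Real.log n with hLdef
    have hL : 0 ≤ L := Real.log_nonneg (by exact_mod_cast Nat.one_le_of_lt h2)
    rw [rpow_pow_exp (by omega) (-(ε/4)) n]
    have hXsum : 2*L + (n:ℝ) * Real.log 2 ≤ (ε/4) * n * L := by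
      have e1 : 2*L ≤ (ε/8) * n * L := by nlinarith
      have e2 : (n:ℝ) * Real.log 2 ≤ (n:ℝ) * ((ε/8) * L) :=
        mul_le_mul_of_nonneg_left hlg npos.le
      nlinarith
    have hexp : (n:ℝ)^2 * 2^n ≤ Real.exp ((ε/4) * (n:ℝ) * L) := by
      have h2e : (2:ℝ) = Real.exp (Real.log 2) := (Real.exp_log two_pos).symm
      have hne : (n:ℝ) = Real.exp L := (Real.exp_log npos).symm
      calc (n:ℝ)^2 * 2^n = Real.exp L ^ 2 * Real.exp (Real.log 2) ^ n := by
            rw [← h2e, ← hne]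
        _ = Real.exp ((2:ℕ) * L + (n:ℕ) * Real.log 2) := by
            rw [Real.exp_add, Real.exp_nat_mul, Real.exp_nat_mul]
        _ = Real.exp (2*L + (n:ℝ) * Real.log 2) := by push_cast; ring_nf
        _ ≤ Real.exp ((ε/4) * (n:ℝ) * L) := Real.exp_le_exp.mpr hXsum
    have hrw : (n:ℝ) * (2^n * Real.exp (-(ε/4) * (n:ℕ) * L))
        = ((n:ℝ)^2 * 2^n) * Real.exp (-(ε/4) * (n:ℕ) * L) * (n:ℝ)⁻¹ := by
      field_simp
    rw [hrw]
    have h1 : ((n:ℝ)^2 * 2^n) * Real.exp (-(ε/4) * (n:ℕ) * L) ≤ 1 := by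
      have hEpos : 0 < Real.exp ((ε/4) * (n:ℝ) * L) := Real.exp_pos _
      rw [show (-(ε/4) * ((n:ℕ):ℝ) * L) = -((ε/4) * (n:ℝ) * L) by push_cast; ring,
        Real.exp_neg, ← div_eq_mul_inv, div_le_one hEpos]
      exact hexp
    calc ((n:ℝ)^2 * 2^n) * Real.exp (-(ε/4) * (n:ℕ) * L) * (n:ℝ)⁻¹
        ≤ 1 * (n:ℝ)⁻¹ := mul_le_mul_of_nonneg_right h1 (by positivity)
      _ = (n:ℝ)⁻¹ := one_mul _
  refine squeeze_zero' (Eventually.of_forall fun n => ?_) hub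
    (tendsto_inv_atTop_zero.comp tendsto_natCast_atTop_atTop)
  positivity

open Filter Topology

/-- If `n·p(n) ≥ (1+ε)·log n` for all large `n`, then the Erdős–Rényi graph `G(n, p(n))`
is connected with probability tending to `1` as `n → ∞`. -/
theorem stmt_1 (ε : ℝ) (hε : 0 < ε) (p : ℕ → ℝ)
    (hp : ∀ n, p n ∈ Set.Icc (0 : ℝ) 1)
    (h : ∀ᶠ (n : ℕ) in Filter.atTop, (1 + ε) * Real.log n ≤ (n : ℝ) * p n) :
    Filter.Tendsto
      (fun n => erProb n (p n) {g : SimpleGraph (Fin n) | g.Connected})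
      Filter.atTop (nhds 1) := by
  have hrt : Tendsto (fun n : ℕ => (n:ℝ) ^ (-(ε/2) : ℝ)) atTop (𝓝 0) :=
    (tendsto_rpow_neg_atTop (by positivity)).comp tendsto_natCast_atTop_atTop
  have hrhalf : ∀ᶠ n : ℕ in atTop, (n:ℝ) ^ (-(ε/2) : ℝ) ≤ 1/2 :=
    (hrt.eventually (gt_mem_nhds (by norm_num : (0:ℝ) < 1/2))).mono fun n hn => hn.le
  have hD : Tendsto
      (fun n => erProb n (p n) ({g : SimpleGraph (Fin n) | g.Connected}ᶜ)) atTop (𝓝 0) := by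
    have hboundEv : ∀ᶠ n : ℕ in atTop,
        erProb n (p n) ({g : SimpleGraph (Fin n) | g.Connected}ᶜ)
          ≤ 4 * (n:ℝ) ^ (-(ε/2) : ℝ) + (n:ℝ) * (2 ^ n * ((n:ℝ) ^ (-(ε/4) : ℝ)) ^ n) := by
      filter_upwards [h, eventually_ge_atTop 2, hrhalf] with n hlog hn2 hr
      have hset : ({g : SimpleGraph (Fin n) | g.Connected}ᶜ)
          = {g : SimpleGraph (Fin n) | ¬ g.Connected} := by
        ext g; simp
      rw [hset]
      exact (disc_sum_bound (hp n).1 (hp n).2 (by omega)).trans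
        (sum_all_bound hε hn2 (hp n).1 (hp n).2 hlog hr)
    have htends0 : Tendsto
        (fun n : ℕ => 4 * (n:ℝ) ^ (-(ε/2) : ℝ)
          + (n:ℝ) * (2 ^ n * ((n:ℝ) ^ (-(ε/4) : ℝ)) ^ n)) atTop (𝓝 0) := by
      have h1 := hrt.const_mul (4:ℝ)
      have h2 := u_tendsto hε
      simpa using h1.add h2
    exact squeeze_zero'
      (Eventually.of_forall fun n => erProb_nonneg (hp n).1 (hp n).2 _) hboundEv htends0
  have heq : (fun n => erProb n (p n) {g : SimpleGraph (Fin n) | g.Connected})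
      = fun n => 1 - erProb n (p n) ({g : SimpleGraph (Fin n) | g.Connected}ᶜ) :=
    funext fun n => erProb_compl n (p n) _
  rw [heq]
  simpa using (tendsto_const_nhds.sub hD)
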